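/- (Lemma 5.) Let m, n₀, n₁ be positive integers. There are no polynomials x, y, z ∈ ℝ[λ] with x(t) > 0, y(t) > 0, z(t) > 0 for every natural number t, with deg x = deg z = 1 and deg y = 3, satisfying the polynomial identity m·x·y·z = (n₀ + n₁·λ)·(x·y + x·z + y·z). -/

import Mathlib

open Polynomial

/-- Lemma 5: there is no real polynomial solution of equation (2) with
`deg x = deg z = 1` and `deg y = 3`. -/
theorem lemma5 (m n₀ n₁ : ℤ) (hm : 0 < m) (hn₀ : 0 < n₀) (hn₁ : 0 < n₁) :
    ¬ ∃ x y z : Polynomial ℝ,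
      (∀ t : ℕ, 0 < x.eval (t : ℝ)) ∧ (∀ t : ℕ, 0 < y.eval (t : ℝ)) ∧
      (∀ t : ℕ, 0 < z.eval (t : ℝ)) ∧
      C (m : ℝ) * (x * y * z) =
        (C (n₀ : ℝ) + C (n₁ : ℝ) * X) * (x * y + x * z + y * z) ∧
      x.natDegree = 1 ∧ z.natDegree = 1 ∧ y.natDegree = 3 := by
  rintro ⟨x, y, z, hx, hy, hz, hid, hdx, hdz, hdy⟩
  set n : Polynomial ℝ := C (n₀ : ℝ) + C (n₁ : ℝ) * X with hn
  have hmR : (0 : ℝ) < (m : ℝ) := by exact_mod_cast hm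
  have hn₀R : (0 : ℝ) < (n₀ : ℝ) := by exact_mod_cast hn₀
  have hn₁R : (0 : ℝ) < (n₁ : ℝ) := by exact_mod_cast hn₁
  have hx0 : 0 < x.eval 0 := by simpa using hx 0
  have hy0 : 0 < y.eval 0 := by simpa using hy 0
  have hz0 : 0 < z.eval 0 := by simpa using hz 0
  have hxne : x ≠ 0 := fun h => by simp [h] at hx0
  have hyne : y ≠ 0 := fun h => by simp [h] at hy0
  have hzne : z ≠ 0 := fun h => by simp [h] at hz0
  have hne0 : n.eval 0 = (n₀ : ℝ) := by simp [hn]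
  have hnne : n ≠ 0 := fun h => by rw [h] at hne0; simp at hne0; linarith
  have hdn : n.natDegree = 1 := by
    rw [hn, add_comm]; exact natDegree_linear (ne_of_gt hn₁R)
  -- derive y * q = n * x * z
  set q : Polynomial ℝ := C (m : ℝ) * (x * z) - n * (x + z) with hq
  have key : y * q = n * (x * z) := by rw [hq, hn] at *; linear_combination hid
  have hnxz : (n * (x * z)).natDegree = 3 := by
    rw [natDegree_mul hnne (mul_ne_zero hxne hzne), natDegree_mul hxne hzne,
      hdn, hdx, hdz]
  have hqne : q ≠ 0 := by
    intro h
    rw [h, mul_zero] at key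
    exact (mul_ne_zero hnne (mul_ne_zero hxne hzne)) key.symm
  have hdq : q.natDegree = 0 := by
    have := natDegree_mul hyne hqne
    rw [key, hnxz, hdy] at this
    omega
  obtain ⟨c, hc⟩ : ∃ c : ℝ, q = C c := ⟨q.coeff 0, eq_C_of_natDegree_eq_zero hdq⟩
  have hcpos : 0 < c := by
    have := congrArg (eval 0) key
    rw [hc] at this
    rw [eval_mul, eval_C, eval_mul, eval_mul, hne0] at this
    nlinarith [mul_pos hn₀R (mul_pos hx0 hz0), hy0]
  -- A * B = C (m*c) + n^2
  set A : Polynomial ℝ := C (m : ℝ) * x - n with hA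
  set B : Polynomial ℝ := C (m : ℝ) * z - n with hB
  have hAB : A * B = C ((m : ℝ) * c) + n ^ 2 := by
    have hc' : C (m : ℝ) * q = C ((m : ℝ) * c) := by rw [hc, ← C_mul]
    rw [hA, hB]
    linear_combination hc' - (C (m : ℝ)) * hq
  have hRHSne : (C ((m : ℝ) * c) + n ^ 2) ≠ 0 := by
    intro h
    have := congrArg (eval 0) h
    rw [eval_add, eval_pow, hne0] at this
    simp at this
    nlinarith
  have hdRHS : (C ((m : ℝ) * c) + n ^ 2).natDegree = 2 := by
    rw [add_comm]
    rw [natDegree_add_C]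
    rw [natDegree_pow, hdn]
  have hAne : A ≠ 0 := fun h => hRHSne (by rw [← hAB, h, zero_mul])
  have hBne : B ≠ 0 := fun h => hRHSne (by rw [← hAB, h, mul_zero])
  have hdAle : A.natDegree ≤ 1 := by
    apply le_trans (natDegree_sub_le _ _)
    simp only [max_le_iff]
    constructor
    · apply le_trans (natDegree_mul_le)
      simp [hdx]
    · rw [hdn]
  have hdBle : B.natDegree ≤ 1 := by
    apply le_trans (natDegree_sub_le _ _)
    simp only [max_le_iff]
    constructor
    · apply le_trans (natDegree_mul_le)
      simp [hdz]
    · rw [hdn]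
  have hdsum : A.natDegree + B.natDegree = 2 := by
    rw [← natDegree_mul hAne hBne, hAB, hdRHS]
  have hdA : A.natDegree = 1 := by omega
  -- A has a real root
  obtain ⟨a, ha, b, hab⟩ := natDegree_eq_one.mp hdA
  have hroot : A.eval (-b / a) = 0 := by
    rw [← hab]
    field_simp
    rw [eval_add, eval_mul, eval_C, eval_X, eval_C, mul_neg, mul_comm a,
      div_mul_cancel₀ b ha]
    ring
  have := congrArg (eval (-b / a)) hAB
  rw [eval_mul, hroot, zero_mul, eval_add, eval_pow] at this
  simp at this
  nlinarith [sq_nonneg (n.eval (-b / a)), this]
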